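/- Let F : ℕ → ℤ satisfy F 0 = 0, F 1 = 1, F (n+2) = -2 F (n+1) + 2 F n. Then 2^n divides F(n+1)^2 - 2 F(n+1) F(n) - 2 F(n)^2, 2^n divides 2 F(n+1) F(n), and 2^n divides F(n+1)^2 + 2 F(n)^2, for every natural number n. -/
import Mathlib


theorem stmt_10 (F : ℕ → ℤ) (h0 : F 0 = 0) (h1 : F 1 = 1)
    (hrec : ∀ n, F (n+2) = -2 * F (n+1) + 2 * F n) :
    ∀ n : ℕ, (2^n : ℤ) ∣ (F (n+1)^2 - 2 * F (n+1) * F n - 2 * F n^2) ∧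
      (2^n : ℤ) ∣ (2 * F (n+1) * F n) ∧
      (2^n : ℤ) ∣ (F (n+1)^2 + 2 * F n^2) := by
  intro n
  induction n with
  | zero => simp [h0, h1]
  | succ n ih =>
    obtain ⟨hA, hB, hC⟩ := ih
    have key : ∀ X : ℤ, (2^n : ℤ) ∣ X → (2^(n+1) : ℤ) ∣ 2 * X := by
      intro X hX
      rw [pow_succ, mul_comm]
      exact mul_dvd_mul_left 2 hX
    refine ⟨?_, ?_, ?_⟩
    · have h := key _ (((hA.sub (hB.mul_left 2)).add (hC.mul_left 2)))
      have e : F (n+1+1)^2 - 2 * F (n+1+1) * F (n+1) - 2 * F (n+1)^2 =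
          2 * ((F (n+1)^2 - 2 * F (n+1) * F n - 2 * F n^2) - 2 * (2 * F (n+1) * F n)
            + 2 * (F (n+1)^2 + 2 * F n^2)) := by
        rw [hrec n]; ring
      rw [e]; exact h
    · have h := key _ ((hA.add hC).neg_right)
      have e : 2 * F (n+1+1) * F (n+1) =
          2 * (-((F (n+1)^2 - 2 * F (n+1) * F n - 2 * F n^2)
            + (F (n+1)^2 + 2 * F n^2))) := by
        rw [hrec n]; ring
      rw [e]; exact h
    · have h := key _ (((hA.sub hB).add (hC.mul_left 2)))
      have e : F (n+1+1)^2 + 2 * F (n+1)^2 =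
          2 * ((F (n+1)^2 - 2 * F (n+1) * F n - 2 * F n^2) - (2 * F (n+1) * F n)
            + 2 * (F (n+1)^2 + 2 * F n^2)) := by
        rw [hrec n]; ring
      rw [e]; exact h
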